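/- Let 𝒳 be any family of ordered pairs (X,Y) with X ⊆ 𝔹 linearly independent and Y suitable for X. If an 𝒳-adequate subset of 𝔹 is partitioned into two cells, then one of the cells must be 𝒳-adequate. -/

import Mathlib

open scoped BigOperators

attribute [local instance] Classical.propDecidable

/-- The countable Boolean group, realized as `ℕ →₀ ZMod 2` (equivalently, finite subsets
of ℕ under symmetric difference), a vector space over `𝔽₂ = ZMod 2`. -/
abbrev BoolGrp : Type := ℕ →₀ ZMod 2

/-- The set of finite sums (symmetric differences) of nonempty finite subsets of `X`. -/
def FSset (X : Set BoolGrp) : Set BoolGrp :=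
  {g | ∃ S : Finset BoolGrp, S.Nonempty ∧ ↑S ⊆ X ∧ g = ∑ v ∈ S, v}

/-- The `X`-support of `y`: for linearly independent `X` and `y` in the span of `X`,
the unique finite `S ⊆ X` with `y = ∑_{v ∈ S} v` (junk value `∅` otherwise). -/
noncomputable def Xsupp (X : Set BoolGrp) (y : BoolGrp) : Finset BoolGrp :=
  if h : ∃ S : Finset BoolGrp, ↑S ⊆ X ∧ y = ∑ v ∈ S, v then h.choose else ∅

/-- The `X`-support of a set `Y`: the union of the `X`-supports of its elements. -/
noncomputable def XsuppSet (X Y : Set BoolGrp) : Set BoolGrp :=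
  ⋃ y ∈ Y, (Xsupp X y : Set BoolGrp)

/-- An `m`-witness for the suitability of `Y` for `X`: an `m`-sequence of elements of
`Y` whose `X`-supports pairwise intersect. -/
def SuitWitness (X Y : Set BoolGrp) {m : ℕ} (y : Fin m → BoolGrp) : Prop :=
  (∀ i, y i ∈ Y) ∧ ∀ i j : Fin m, i < j →
    ((Xsupp X (y i) : Set BoolGrp) ∩ (Xsupp X (y j) : Set BoolGrp)).Nonempty

/-- `Y ⊆ FS(X)` is suitable for (linearly independent) `X` if (i) for each `m` there is
an `m`-witness for suitability, and (ii) whenever the `X`-supports of `y, y' ∈ Y` (not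
necessarily distinct) intersect, the intersection is not covered by the `X`-support of
`Y \ {y, y'}`. -/
def Suitable (X Y : Set BoolGrp) : Prop :=
  Y ⊆ FSset X ∧
  (∀ m : ℕ, ∃ y : Fin m → BoolGrp, SuitWitness X Y y) ∧
  ∀ y ∈ Y, ∀ y' ∈ Y,
    ((Xsupp X y : Set BoolGrp) ∩ (Xsupp X y' : Set BoolGrp)).Nonempty →
    (((Xsupp X y : Set BoolGrp) ∩ (Xsupp X y' : Set BoolGrp)) \
      XsuppSet X (Y \ {y, y'})).Nonempty

/-- The set of finite sums of a finite sequence `a : Fin m → BoolGrp`. -/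
def FSfin {m : ℕ} (a : Fin m → BoolGrp) : Set BoolGrp :=
  {g | ∃ s : Finset (Fin m), s.Nonempty ∧ g = ∑ j ∈ s, a j}

/-- `a` is a `(𝒴, m)`-witness for the adequacy of `A`: for each `(X, Y) ∈ 𝒴`,
`FS(a) ⊆ A ∩ FS(Y)` and there is an `m`-witness `y` for the suitability of `Y` such that
for all distinct `j, k`, `y j ∈ Y-supp(a j)` and `y j ∉ Y-supp(a k)`. -/
def AdequateWitness (𝒴 : Set (Set BoolGrp × Set BoolGrp)) (A : Set BoolGrp)
    {m : ℕ} (a : Fin m → BoolGrp) : Prop :=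
  ∀ XY ∈ 𝒴, FSfin a ⊆ A ∩ FSset XY.2 ∧
    ∃ y : Fin m → BoolGrp, SuitWitness XY.1 XY.2 y ∧
      ∀ j k : Fin m, j ≠ k → y j ∈ Xsupp XY.2 (a j) ∧ y j ∉ Xsupp XY.2 (a k)

/-- `A` is `(𝒴, m)`-adequate if there is a `(𝒴, m)`-witness for its adequacy. -/
def Adequate (𝒴 : Set (Set BoolGrp × Set BoolGrp)) (m : ℕ) (A : Set BoolGrp) : Prop :=
  ∃ a : Fin m → BoolGrp, AdequateWitness 𝒴 A a

/-- `A` is `𝒳`-adequate if it is `(𝒴, m)`-adequate for every finite `𝒴 ⊆ 𝒳` and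
every `m`. -/
def XAdequate (𝒳 : Set (Set BoolGrp × Set BoolGrp)) (A : Set BoolGrp) : Prop :=
  ∀ 𝒴 ⊆ 𝒳, 𝒴.Finite → ∀ m : ℕ, Adequate 𝒴 m A

/-- A family of pairs `(X, Y)` with each `X` linearly independent and each `Y` suitable
for `X`. -/
def GoodFamily (𝒳 : Set (Set BoolGrp × Set BoolGrp)) : Prop :=
  ∀ XY ∈ 𝒳, LinearIndependent (ZMod 2) ((↑) : XY.1 → BoolGrp) ∧ Suitable XY.1 XY.2


section Aux


/-- Partial semigroup of finite subsets of ℕ under disjoint union, with junk element. -/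
structure PS where
  val : Option (Finset ℕ)

namespace PS

noncomputable instance instAdd : Add PS :=
  ⟨fun x y => ⟨x.val.bind fun s => y.val.bind fun t =>
    if Disjoint s t then some (s ∪ t) else none⟩⟩

instance instZero : Zero PS := ⟨⟨some ∅⟩⟩

theorem some_add_some (s t : Finset ℕ) :
    (⟨some s⟩ + ⟨some t⟩ : PS) = ⟨if Disjoint s t then some (s ∪ t) else none⟩ := rfl

theorem none_add (x : PS) : (⟨none⟩ : PS) + x = ⟨none⟩ := rfl

theorem add_none (x : PS) : x + (⟨none⟩ : PS) = ⟨none⟩ := by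
  rcases x with ⟨_ | s⟩ <;> rfl

theorem zero_def : (0 : PS) = ⟨some ∅⟩ := rfl

noncomputable instance : AddCommMonoid PS where
  nsmul := nsmulRec
  add_assoc := by
    rintro ⟨_ | s⟩ ⟨_ | t⟩ ⟨_ | u⟩ <;> try simp only [none_add, add_none]
    rw [some_add_some s t, some_add_some t u]
    by_cases hst : Disjoint s t <;> by_cases htu : Disjoint t u <;>
      simp only [hst, htu, if_true, if_false, none_add, add_none, some_add_some]
    · by_cases hsu : Disjoint s u
      · rw [if_pos (Finset.disjoint_union_left.2 ⟨hsu, htu⟩),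
          if_pos (Finset.disjoint_union_right.2 ⟨hst, hsu⟩), Finset.union_assoc]
      · rw [if_neg fun h => hsu (Finset.disjoint_union_left.1 h).1,
          if_neg fun h => hsu (Finset.disjoint_union_right.1 h).2]
    · rw [if_neg fun h => htu (Finset.disjoint_union_left.1 h).2]
    · rw [if_neg fun h => hst (Finset.disjoint_union_right.1 h).1]
  zero_add := by
    rintro ⟨_ | s⟩
    · rfl
    · rw [zero_def, some_add_some, if_pos (Finset.disjoint_empty_left s), Finset.empty_union]
  add_zero := by
    rintro ⟨_ | s⟩
    · rfl
    · rw [zero_def, some_add_some, if_pos (Finset.disjoint_empty_right s), Finset.union_empty]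
  add_comm := by
    rintro ⟨_ | s⟩ ⟨_ | t⟩ <;> try simp only [none_add, add_none]
    rw [some_add_some, some_add_some]
    by_cases h : Disjoint s t
    · rw [if_pos h, if_pos h.symm, Finset.union_comm]
    · rw [if_neg h, if_neg fun h' => h h'.symm]

end PS


/-- the stream `n ↦ {n+k}` -/
def streamOf (k : ℕ) : Stream' PS := fun n => ⟨some {n + k}⟩

theorem streamOf_tail (k : ℕ) : (streamOf k).tail = streamOf (k + 1) := by
  funext n
  exact congrArg (fun j => (⟨some {j}⟩ : PS)) (by omega : n + 1 + k = n + (k + 1))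

theorem fs_shape {x : PS} {b : Stream' PS} (hx : x ∈ Hindman.FS b) :
    ∀ k, b = streamOf k → ∃ u : Finset ℕ, u.Nonempty ∧ (∀ i ∈ u, k ≤ i) ∧ x = ⟨some u⟩ := by
  induction hx with
  | head' a =>
    intro k hk
    refine ⟨{k}, Finset.singleton_nonempty k, by simp, ?_⟩
    rw [hk]
    show streamOf k 0 = _
    simp [streamOf]
  | tail' a m h ih =>
    intro k hk
    obtain ⟨u, hu1, hu2, hu3⟩ := ih (k + 1) (by rw [hk, streamOf_tail])
    exact ⟨u, hu1, fun i hi => le_trans (Nat.le_succ k) (hu2 i hi), hu3⟩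
  | cons' a m h ih =>
    intro k hk
    obtain ⟨u, hu1, hu2, hu3⟩ := ih (k + 1) (by rw [hk, streamOf_tail])
    have hhead : a.head = (⟨some {k}⟩ : PS) := by
      rw [hk]; show streamOf k 0 = _; simp [streamOf]
    have hdisj : Disjoint ({k} : Finset ℕ) u := by
      simp only [Finset.disjoint_singleton_left]
      intro hkin
      exact absurd (hu2 k hkin) (by omega)
    refine ⟨{k} ∪ u, ⟨k, by simp⟩, ?_, ?_⟩
    · intro i hi
      rcases Finset.mem_union.1 hi with hi | hi
      · simp at hi; omega
      · exact le_trans (Nat.le_succ k) (hu2 i hi)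
    · rw [hhead, hu3, PS.some_add_some, if_pos hdisj]

theorem sum_some {w : Finset ℕ} (U : ℕ → Finset ℕ)
    (hdisj : ∀ i ∈ w, ∀ j ∈ w, i ≠ j → Disjoint (U i) (U j)) :
    ∑ n ∈ w, (⟨some (U n)⟩ : PS) = ⟨some (w.biUnion U)⟩ := by
  induction w using Finset.induction_on with
  | empty => rfl
  | @insert a s hnot ih =>
    rw [Finset.sum_insert hnot, ih (fun i hi j hj hij =>
      hdisj i (Finset.mem_insert_of_mem hi) j (Finset.mem_insert_of_mem hj) hij),
      PS.some_add_some, Finset.biUnion_insert]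
    rw [if_pos]
    rw [Finset.disjoint_biUnion_right]
    intro i hi
    exact hdisj a (Finset.mem_insert_self a s) i (Finset.mem_insert_of_mem hi)
      (fun h => hnot (h ▸ hi))

/-- Infinite Folkman theorem for 2-colourings of finite subsets of ℕ. -/
theorem folkman_inf (m : ℕ) (c : Finset ℕ → Bool) :
    ∃ t : Fin m → Finset ℕ, (∀ k, (t k).Nonempty) ∧
      (∀ k l : Fin m, k ≠ l → Disjoint (t k) (t l)) ∧
      ∃ v : Bool, ∀ w : Finset (Fin m), w.Nonempty → c (w.biUnion t) = v := by
  set C : Bool → Set PS := fun v =>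
    {x | ∃ u : Finset ℕ, u.Nonempty ∧ c u = v ∧ x = ⟨some u⟩} with hC
  obtain ⟨cell, hcell, b, hb⟩ := Hindman.FS_partition_regular (streamOf 0)
    {C true, C false} (Set.toFinite _) (by
      intro x hx
      obtain ⟨u, hu1, -, hu3⟩ := fs_shape hx 0 rfl
      rcases Bool.dichotomy (c u) with h | h
      · exact ⟨C false, by simp, u, hu1, h, hu3⟩
      · exact ⟨C true, by simp, u, hu1, h, hu3⟩)
  have hv : ∃ v : Bool, cell = C v := by
    rcases hcell with h | h
    · exact ⟨true, h⟩
    · exact ⟨false, h⟩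
  obtain ⟨v, rfl⟩ := hv
  have hmem : ∀ n, ∃ u : Finset ℕ, u.Nonempty ∧ c u = v ∧ b.get n = ⟨some u⟩ :=
    fun n => hb (Hindman.FS.singleton b n)
  choose U hU1 hU2 hU3 using hmem
  have hUdisj : ∀ i j : ℕ, i ≠ j → Disjoint (U i) (U j) := by
    have key : ∀ i j : ℕ, i < j → Disjoint (U i) (U j) := by
      intro i j hij
      obtain ⟨u', -, -, hu'⟩ := hb (Hindman.FS.add_two b i j hij)
      rw [hU3 i, hU3 j, PS.some_add_some] at hu'
      by_contra hdisj
      rw [if_neg hdisj] at hu'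
      exact Option.some_ne_none _ (congrArg PS.val hu').symm
    intro i j hij
    rcases Nat.lt_or_ge i j with h | h
    · exact key i j h
    · exact (key j i (by omega)).symm
  refine ⟨fun k => U ↑k, fun k => hU1 _, fun k l hkl => hUdisj _ _ (by
    simpa [Fin.val_eq_val] using hkl), v, ?_⟩
  intro w hw
  have himg : (w.image (Fin.val)).Nonempty := hw.image _
  obtain ⟨u', hu'1, hu'2, hu'3⟩ := hb (Hindman.FS.finset_sum b (w.image Fin.val) himg)
  have hsum : ∑ n ∈ w.image Fin.val, b.get n
      = (⟨some ((w.image Fin.val).biUnion U)⟩ : PS) := by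
    rw [Finset.sum_congr rfl (fun n _ => hU3 n)]
    exact sum_some U (fun i _ j _ hij => hUdisj i j hij)
  rw [hsum] at hu'3
  have huu : u' = (w.image Fin.val).biUnion U := by
    exact Option.some.inj (congrArg PS.val hu'3.symm)
  have hbi : (w.image Fin.val).biUnion U = w.biUnion (fun k => U ↑k) := by
    ext i
    simp [Finset.mem_biUnion, Finset.mem_image]
  rw [hbi] at huu
  exact huu ▸ hu'2

/-- Finite Folkman property. -/
def FolkProp (m M : ℕ) : Prop :=
  ∀ c : Finset ℕ → Bool, ∃ t : Fin m → Finset ℕ, (∀ k, (t k).Nonempty) ∧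
    (∀ k, t k ⊆ Finset.range M) ∧
    (∀ k l : Fin m, k ≠ l → Disjoint (t k) (t l)) ∧
    ∃ v : Bool, ∀ w : Finset (Fin m), w.Nonempty → c (w.biUnion t) = v

theorem folkman_fin (m : ℕ) : ∃ M, FolkProp m M := by
  by_contra h
  push_neg at h
  have h2 : ∀ M : ℕ, ∃ c : Finset ℕ → Bool, ¬ (∃ t : Fin m → Finset ℕ,
      (∀ k, (t k).Nonempty) ∧ (∀ k, t k ⊆ Finset.range M) ∧
      (∀ k l : Fin m, k ≠ l → Disjoint (t k) (t l)) ∧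
      ∃ v : Bool, ∀ w : Finset (Fin m), w.Nonempty → c (w.biUnion t) = v) :=
    fun M => not_forall.1 (h M)
  choose C hC using h2
  set U := Filter.hyperfilter ℕ with hU
  set c : Finset ℕ → Bool := fun s => decide ({M | C M s = true} ∈ U) with hc
  have hagree : ∀ s : Finset ℕ, {M : ℕ | C M s = c s} ∈ U := by
    intro s
    by_cases hs : {M | C M s = true} ∈ U
    · have hcs : c s = true := by rw [hc]; exact decide_eq_true hs
      rw [hcs]; exact hs
    · have hcs : c s = false := by rw [hc]; exact decide_eq_false hs
      rw [hcs]
      have hcompl : {M : ℕ | C M s = true}ᶜ ∈ U := Ultrafilter.compl_mem_iff_notMem.2 hs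
      have heq : {M : ℕ | C M s = false} = {M : ℕ | C M s = true}ᶜ := by
        ext M; simp
      rw [heq]; exact hcompl
  obtain ⟨t, ht1, ht2, v, hv⟩ := folkman_inf m c
  set N := (Finset.univ.sup fun k : Fin m => (t k).sup id) + 1 with hN
  have htN : ∀ k, t k ⊆ Finset.range N := by
    intro k i hi
    rw [Finset.mem_range]
    have h1 : i ≤ (t k).sup id := Finset.le_sup (f := id) hi
    have h2 : (t k).sup id ≤ Finset.univ.sup (fun k : Fin m => (t k).sup id) :=
      Finset.le_sup (f := fun k : Fin m => (t k).sup id) (Finset.mem_univ k)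
    omega
  have hcof : {M : ℕ | N ≤ M} ∈ U := by
    have heq : {M : ℕ | N ≤ M} = {M : ℕ | M < N}ᶜ := by ext M; simp
    rw [heq]
    exact (Set.finite_lt_nat N).compl_mem_hyperfilter
  have hbig : ((⋂ w : Finset (Fin m),
      {M : ℕ | C M (w.biUnion t) = c (w.biUnion t)}) ∩ {M : ℕ | N ≤ M}) ∈ U :=
    Filter.inter_mem (Filter.iInter_mem.2 fun w => hagree _) hcof
  obtain ⟨M, hM⟩ := Filter.nonempty_of_mem hbig
  refine hC M ⟨t, ht1, fun k => (htN k).trans (Finset.range_subset_range.2 hM.2), ht2, v, ?_⟩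
  intro w hw
  have hMw : C M (w.biUnion t) = c (w.biUnion t) := by
    have hM1 := hM.1
    rw [Set.mem_iInter] at hM1
    exact hM1 w
  rw [hMw]
  exact hv w hw



theorem Xsupp_spec {X : Set BoolGrp} {y : BoolGrp} (hy : y ∈ FSset X) :
    ↑(Xsupp X y) ⊆ X ∧ y = ∑ v ∈ Xsupp X y, v := by
  obtain ⟨S, -, hS1, hS2⟩ := hy
  have h : ∃ S : Finset BoolGrp, ↑S ⊆ X ∧ y = ∑ v ∈ S, v := ⟨S, hS1, hS2⟩
  rw [Xsupp, dif_pos h]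
  exact h.choose_spec

theorem sum_eq_zero_empty {X : Set BoolGrp}
    (hX : LinearIndependent (ZMod 2) ((↑) : X → BoolGrp))
    {S : Finset BoolGrp} (hS : ↑S ⊆ X) (h0 : ∑ v ∈ S, v = 0) : S = ∅ := by
  by_contra hne
  obtain ⟨x, hx⟩ := Finset.nonempty_of_ne_empty hne
  let f : {v // v ∈ S} ↪ X :=
    ⟨fun u => ⟨u.1, hS u.2⟩, fun u u' h => Subtype.ext (by simpa using congrArg Subtype.val h)⟩
  have hsum : ∑ i ∈ S.attach.map f, (1 : ZMod 2) • (i : BoolGrp) = 0 := by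
    rw [Finset.sum_map]
    simp only [one_smul]
    exact (Finset.sum_attach S (fun v => v)).trans h0
  have := linearIndependent_iff'.1 hX (S.attach.map f) (fun _ => 1) hsum
    ⟨x, hS hx⟩ (Finset.mem_map.2 ⟨⟨x, hx⟩, Finset.mem_attach _ _, rfl⟩)
  exact one_ne_zero this

theorem Xsupp_nonempty {X : Set BoolGrp}
    (hX : LinearIndependent (ZMod 2) ((↑) : X → BoolGrp))
    {y : BoolGrp} (hy : y ∈ FSset X) : (Xsupp X y).Nonempty := by
  have h2 := (Xsupp_spec hy).2
  obtain ⟨S, hSne, hS1, hS2⟩ := hy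
  by_contra hne
  rw [Finset.not_nonempty_iff_eq_empty] at hne
  rw [hne, Finset.sum_empty] at h2
  have hS0 : S = ∅ := sum_eq_zero_empty hX hS1 (by rw [← hS2]; exact h2)
  obtain ⟨x, hx⟩ := hSne
  rw [hS0] at hx
  exact absurd hx (Finset.notMem_empty x)

theorem indicator_sum {x₀ : BoolGrp} {S : Finset BoolGrp} {f : BoolGrp → ZMod 2}
    (h : ∀ x ∈ S, f x = if x = x₀ then 1 else 0) :
    ∑ x ∈ S, f x = if x₀ ∈ S then 1 else 0 := by
  rw [Finset.sum_congr rfl h, Finset.sum_ite_eq' S x₀ (fun _ => (1 : ZMod 2))]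

/-- Existence of a separating linear functional for `y₀ ∈ Y`. -/
theorem exists_dual {X Y : Set BoolGrp}
    (hX : LinearIndependent (ZMod 2) ((↑) : X → BoolGrp))
    (hs : Suitable X Y) {y₀ : BoolGrp} (hy₀ : y₀ ∈ Y) :
    ∃ φ : BoolGrp →ₗ[ZMod 2] ZMod 2, φ y₀ = 1 ∧ ∀ y ∈ Y, y ≠ y₀ → φ y = 0 := by
  have hy₀FS : y₀ ∈ FSset X := hs.1 hy₀
  obtain ⟨hS1, hS2⟩ := Xsupp_spec hy₀FS
  have hSne : (Xsupp X y₀).Nonempty := Xsupp_nonempty hX hy₀FS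
  have hinter : ((Xsupp X y₀ : Set BoolGrp) ∩ (Xsupp X y₀ : Set BoolGrp)).Nonempty := by
    rw [Set.inter_self]
    exact ⟨hSne.choose, hSne.choose_spec⟩
  obtain ⟨x₀, hx₀⟩ := hs.2.2 y₀ hy₀ y₀ hy₀ hinter
  rw [Set.inter_self] at hx₀
  have hx₀S : x₀ ∈ Xsupp X y₀ := hx₀.1
  have hx₀X : x₀ ∈ X := hS1 hx₀S
  have hpriv : ∀ y ∈ Y, y ≠ y₀ → x₀ ∉ (Xsupp X y : Set BoolGrp) := by
    intro y hy hne hmem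
    refine hx₀.2 ?_
    rw [XsuppSet]
    refine Set.mem_iUnion.2 ⟨y, Set.mem_iUnion.2 ⟨?_, hmem⟩⟩
    refine ⟨hy, ?_⟩
    rw [Set.pair_eq_singleton]
    exact hne
  have hX' : LinearIndepOn (ZMod 2) id X := hX
  let B := Module.Basis.extend hX'
  let i₀ : hX'.extend (Set.subset_univ X) := ⟨x₀, hX'.subset_extend _ hx₀X⟩
  let φ : BoolGrp →ₗ[ZMod 2] ZMod 2 := B.coord i₀
  have hφX : ∀ x (hx : x ∈ X), φ x = if x = x₀ then 1 else 0 := by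
    intro x hx
    have hxB : B ⟨x, hX'.subset_extend _ hx⟩ = x := Module.Basis.extend_apply_self hX' _
    have h1 : φ x = B.repr x i₀ := B.coord_apply i₀ x
    have h2 : B.repr x = Finsupp.single ⟨x, hX'.subset_extend _ hx⟩ 1 := by
      conv_lhs => rw [← hxB]
      exact B.repr_self _
    rw [h1, h2, Finsupp.single_apply]
    by_cases hxx : x = x₀
    · rw [if_pos hxx, if_pos (Subtype.ext hxx)]
    · rw [if_neg hxx, if_neg (fun hc => hxx (congrArg Subtype.val hc))]
  have key : ∀ y ∈ FSset X, φ y = if x₀ ∈ Xsupp X y then 1 else 0 := by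
    intro y hy
    obtain ⟨hT1, hT2⟩ := Xsupp_spec hy
    calc φ y = φ (∑ v ∈ Xsupp X y, v) := congrArg φ hT2
      _ = ∑ v ∈ Xsupp X y, φ v := map_sum φ _ _
      _ = if x₀ ∈ Xsupp X y then 1 else 0 :=
          indicator_sum (fun x hx => hφX x (hT1 hx))
  refine ⟨φ, ?_, ?_⟩
  · rw [key y₀ hy₀FS, if_pos hx₀S]
  · intro y hy hne
    rw [key y (hs.1 hy), if_neg (fun hc => hpriv y hy hne (Finset.mem_coe.2 hc))]

/-- The separating functional detects membership in X-supports. -/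
theorem mem_Xsupp_iff_phi {Y : Set BoolGrp} {y₀ : BoolGrp}
    (φ : BoolGrp →ₗ[ZMod 2] ZMod 2) (hφ1 : φ y₀ = 1)
    (hφ0 : ∀ y ∈ Y, y ≠ y₀ → φ y = 0) {z : BoolGrp} (hz : z ∈ FSset Y) :
    (y₀ ∈ Xsupp Y z ↔ φ z = 1) := by
  obtain ⟨hT1, hT2⟩ := Xsupp_spec hz
  have hval : φ z = if y₀ ∈ Xsupp Y z then 1 else 0 := by
    calc φ z = φ (∑ v ∈ Xsupp Y z, v) := congrArg φ hT2
      _ = ∑ v ∈ Xsupp Y z, φ v := map_sum φ _ _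
      _ = if y₀ ∈ Xsupp Y z then 1 else 0 := by
          refine indicator_sum (fun y hy => ?_)
          by_cases hyy : y = y₀
          · rw [if_pos hyy, hyy, hφ1]
          · rw [if_neg hyy, hφ0 y (hT1 hy) hyy]
  rw [hval]
  by_cases hmem : y₀ ∈ Xsupp Y z
  · simp [hmem]
  · simp [hmem]


/-- the blocks lemma: block sums of an adequacy witness are again an adequacy witness. -/
theorem blocks_witness (𝒴 : Set (Set BoolGrp × Set BoolGrp))
    (hgood : ∀ XY ∈ 𝒴, LinearIndependent (ZMod 2) ((↑) : XY.1 → BoolGrp) ∧ Suitable XY.1 XY.2)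
    {M : ℕ} (hM : 2 ≤ M) (A' : Set BoolGrp) {A : Set BoolGrp} (a : Fin M → BoolGrp)
    (ha : AdequateWitness 𝒴 A a) {m : ℕ} (t : Fin m → Finset (Fin M))
    (htne : ∀ k, (t k).Nonempty)
    (htd : ∀ k l : Fin m, k ≠ l → Disjoint (t k) (t l))
    (hA' : ∀ w : Finset (Fin m), w.Nonempty → (∑ k ∈ w, ∑ i ∈ t k, a i) ∈ A') :
    AdequateWitness 𝒴 A' (fun k => ∑ i ∈ t k, a i) := by
  have h01 : ∀ x : ZMod 2, x = 0 ∨ x = 1 := by decide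
  intro XY hXY
  obtain ⟨hX, hsuit⟩ := hgood XY hXY
  obtain ⟨hFS, y, hySuit, hyjk⟩ := ha XY hXY
  set b : Fin m → BoolGrp := fun k => ∑ i ∈ t k, a i with hb
  have hsum : ∀ w : Finset (Fin m), ∑ k ∈ w, b k = ∑ i ∈ w.biUnion t, a i := by
    intro w
    rw [Finset.sum_biUnion (fun k _ l _ hkl => htd k l hkl)]
  have hbFS : ∀ g ∈ FSfin b, g ∈ FSfin a := by
    rintro g ⟨w, hw, hgw⟩
    refine ⟨w.biUnion t, ?_, by rw [hgw, hsum]⟩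
    obtain ⟨k, hk⟩ := hw
    obtain ⟨i, hi⟩ := htne k
    exact ⟨i, Finset.mem_biUnion.2 ⟨k, hk, hi⟩⟩
  have haFS : ∀ j : Fin M, a j ∈ FSset XY.2 := fun j =>
    (hFS ⟨{j}, Finset.singleton_nonempty j, (Finset.sum_singleton a j).symm⟩).2
  have hbself : ∀ k, b k ∈ FSfin b := fun k =>
    ⟨{k}, Finset.singleton_nonempty k, (Finset.sum_singleton b k).symm⟩
  have hbFSY : ∀ k, b k ∈ FSset XY.2 := fun k => (hFS (hbFS _ (hbself k))).2
  constructor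
  · rintro g hg
    refine ⟨?_, (hFS (hbFS g hg)).2⟩
    obtain ⟨w, hw, hgw⟩ := hg
    rw [hgw]
    exact hA' w hw
  set r : (k : Fin m) → Fin M := fun k => (htne k).choose with hr
  have hrmem : ∀ k, r k ∈ t k := fun k => (htne k).choose_spec
  have hrne : ∀ k l, k ≠ l → r k ≠ r l := fun k l hkl he =>
    (Finset.disjoint_left.1 (htd k l hkl)) (hrmem k) (he ▸ hrmem l)
  refine ⟨fun k => y (r k), ⟨fun k => hySuit.1 _, ?_⟩, ?_⟩
  · intro k l hkl
    rcases lt_trichotomy (r k) (r l) with h | h | h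
    · exact hySuit.2 _ _ h
    · exact absurd h (hrne k l (ne_of_lt hkl))
    · obtain ⟨x, hx1, hx2⟩ := hySuit.2 _ _ h
      exact ⟨x, hx2, hx1⟩
  · intro j k hjk
    obtain ⟨φ, hφ1, hφ0⟩ := exists_dual hX hsuit (hySuit.1 (r j))
    have hφa : ∀ i : Fin M, i ≠ r j → φ (a i) = 0 := by
      intro i hi
      have hnot : y (r j) ∉ Xsupp XY.2 (a i) := (hyjk (r j) i (fun h => hi h.symm)).2
      rcases h01 (φ (a i)) with h | h
      · exact h
      · exact absurd ((mem_Xsupp_iff_phi φ hφ1 hφ0 (haFS i)).2 h) hnot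
    have hφrj : φ (a (r j)) = 1 := by
      have hex : ∃ i : Fin M, i ≠ r j := by
        rcases eq_or_ne ((r j : Fin M) : ℕ) 0 with h | h
        · exact ⟨⟨1, by omega⟩, fun hc => by simp [← hc] at h⟩
        · exact ⟨⟨0, by omega⟩, fun hc => h (by simp [← hc])⟩
      obtain ⟨i, hi⟩ := hex
      have hmem : y (r j) ∈ Xsupp XY.2 (a (r j)) :=
        (hyjk (r j) i (fun h => hi h.symm)).1
      exact (mem_Xsupp_iff_phi φ hφ1 hφ0 (haFS (r j))).1 hmem
    have hφb : ∀ l, φ (b l) = ∑ i ∈ t l, φ (a i) := fun l => map_sum φ _ _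
    constructor
    · apply (mem_Xsupp_iff_phi φ hφ1 hφ0 (hbFSY j)).2
      rw [hφb j, ← Finset.add_sum_erase _ _ (hrmem j), hφrj,
        Finset.sum_eq_zero (fun i hi => hφa i (Finset.ne_of_mem_erase hi)), add_zero]
    · intro hmem
      have hone := (mem_Xsupp_iff_phi φ hφ1 hφ0 (hbFSY k)).1 hmem
      rw [hφb k, Finset.sum_eq_zero (fun i hi => hφa i (fun he =>
        Finset.disjoint_left.1 (htd j k hjk) (hrmem j) (he ▸ hi)))] at hone
      exact zero_ne_one hone

theorem adequateWitness_sub {𝒴' 𝒴 : Set (Set BoolGrp × Set BoolGrp)} {A : Set BoolGrp}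
    (hsub : 𝒴' ⊆ 𝒴) {m : ℕ} {a : Fin m → BoolGrp} (h : AdequateWitness 𝒴 A a) :
    AdequateWitness 𝒴' A a := fun XY hXY => h XY (hsub hXY)

theorem sum_attachFin {β : Type*} [AddCommMonoid β] {M : ℕ} (f : Fin M → β) (g : ℕ → β)
    (hfg : ∀ i : Fin M, g ↑i = f i) (s : Finset ℕ) (h : ∀ i ∈ s, i < M) :
    ∑ i ∈ s.attachFin h, f i = ∑ j ∈ s, g j := by
  refine Finset.sum_bij (fun i _ => (i : ℕ)) ?_ ?_ ?_ ?_
  · intro i hi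
    exact (Finset.mem_attachFin h).1 hi
  · intro i _ i' _ hii
    exact Fin.ext hii
  · intro j hj
    exact ⟨⟨j, h j hj⟩, (Finset.mem_attachFin h).2 hj, rfl⟩
  · intro i _
    exact (hfg i).symm

end Aux

/-- If `𝒳` is a family of pairs `(X, Y)` with `X` linearly independent and `Y` suitable
for `X`, and an `𝒳`-adequate set is partitioned into two cells, then one of the cells is
`𝒳`-adequate. -/
theorem xAdequate_partition (𝒳 : Set (Set BoolGrp × Set BoolGrp))
    (hgood : GoodFamily 𝒳) (A A₀ A₁ : Set BoolGrp)
    (hA : XAdequate 𝒳 A) (hpart : A = A₀ ∪ A₁) :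
    XAdequate 𝒳 A₀ ∨ XAdequate 𝒳 A₁ := by
  by_contra hcon
  push_neg at hcon
  obtain ⟨h0, h1⟩ := hcon
  rw [XAdequate] at h0 h1
  push_neg at h0 h1
  obtain ⟨𝒴₀, h𝒴₀sub, h𝒴₀fin, m₀, hm₀⟩ := h0
  obtain ⟨𝒴₁, h𝒴₁sub, h𝒴₁fin, m₁, hm₁⟩ := h1
  have hempty : ∀ (mm : ℕ) (B : Set BoolGrp), Adequate ∅ mm B :=
    fun mm B => ⟨fun _ => 0, fun XY h => absurd h (Set.notMem_empty XY)⟩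
  rcases Set.eq_empty_or_nonempty 𝒴₀ with rfl | h𝒴₀ne
  · exact hm₀ (hempty _ _)
  rcases Set.eq_empty_or_nonempty 𝒴₁ with rfl | h𝒴₁ne
  · exact hm₁ (hempty _ _)
  set 𝒴 : Set (Set BoolGrp × Set BoolGrp) := 𝒴₀ ∪ 𝒴₁ with h𝒴
  have h𝒴sub : 𝒴 ⊆ 𝒳 := Set.union_subset h𝒴₀sub h𝒴₁sub
  have h𝒴fin : 𝒴.Finite := h𝒴₀fin.union h𝒴₁fin
  have hgood𝒴 : ∀ XY ∈ 𝒴, LinearIndependent (ZMod 2) ((↑) : XY.1 → BoolGrp) ∧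
      Suitable XY.1 XY.2 := fun XY h => hgood XY (h𝒴sub h)
  obtain ⟨XY₀, hXY₀⟩ := h𝒴₀ne
  have hXY₀𝒴 : XY₀ ∈ 𝒴 := Set.mem_union_left _ hXY₀
  set m : ℕ := max m₀ m₁ + 2 with hm
  have hm2 : 2 ≤ m := by omega
  obtain ⟨M₀, hFolk₀⟩ := folkman_fin m
  set M : ℕ := M₀ + 2 with hMdef
  have hM2 : 2 ≤ M := by omega
  have hFolk : FolkProp m M := by
    intro c
    obtain ⟨t, ht1, ht2, ht3, hv⟩ := hFolk₀ c
    exact ⟨t, ht1, fun k => (ht2 k).trans (Finset.range_subset_range.2 (by omega)), ht3, hv⟩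
  obtain ⟨a, ha⟩ := hA 𝒴 h𝒴sub h𝒴fin M
  set a' : ℕ → BoolGrp := fun j => if h : j < M then a ⟨j, h⟩ else 0 with ha'
  have ha'i : ∀ i : Fin M, a' ↑i = a i := fun i => by
    rw [ha']; exact dif_pos i.isLt
  set c : Finset ℕ → Bool := fun s => decide ((∑ j ∈ s, a' j) ∈ A₀) with hcdef
  obtain ⟨t, htne, htrange, htdisj, v, hv⟩ := hFolk c
  have htbd : ∀ k, ∀ i ∈ t k, i < M := fun k i hi => Finset.mem_range.1 (htrange k hi)
  set T : Fin m → Finset (Fin M) := fun k => (t k).attachFin (htbd k) with hT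
  have hTne : ∀ k, (T k).Nonempty := by
    intro k
    obtain ⟨i, hi⟩ := htne k
    exact ⟨⟨i, htbd k i hi⟩, (Finset.mem_attachFin _).2 hi⟩
  have hTdisj : ∀ k l : Fin m, k ≠ l → Disjoint (T k) (T l) := by
    intro k l hkl
    rw [Finset.disjoint_left]
    intro i hik hil
    exact Finset.disjoint_left.1 (htdisj k l hkl)
      ((Finset.mem_attachFin _).1 hik) ((Finset.mem_attachFin _).1 hil)
  have hTconv : ∀ k, ∑ i ∈ T k, a i = ∑ j ∈ t k, a' j :=
    fun k => sum_attachFin a a' ha'i (t k) (htbd k)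
  -- every combined block sum lies in A and equals the ℕ-indexed sum
  have hgsum : ∀ w : Finset (Fin m),
      ∑ k ∈ w, ∑ i ∈ T k, a i = ∑ j ∈ w.biUnion t, a' j := by
    intro w
    rw [Finset.sum_congr rfl (fun k _ => hTconv k),
      Finset.sum_biUnion (fun k _ l _ hkl => htdisj k l hkl)]
  have hgFS : ∀ w : Finset (Fin m), w.Nonempty →
      (∑ k ∈ w, ∑ i ∈ T k, a i) ∈ FSfin a := by
    intro w hw
    refine ⟨w.biUnion T, ?_, (Finset.sum_biUnion (fun k _ l _ hkl => hTdisj k l hkl)).symm⟩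
    obtain ⟨k, hk⟩ := hw
    obtain ⟨i, hi⟩ := hTne k
    exact ⟨i, Finset.mem_biUnion.2 ⟨k, hk, hi⟩⟩
  have hgA : ∀ w : Finset (Fin m), w.Nonempty →
      (∑ k ∈ w, ∑ i ∈ T k, a i) ∈ A := by
    intro w hw
    exact ((ha XY₀ hXY₀𝒴).1 (hgFS w hw)).1
  -- the key step: for any cell containing all block sums we get adequacy at all mm ≤ m
  have key : ∀ (A' : Set BoolGrp),
      (∀ w : Finset (Fin m), w.Nonempty → (∑ k ∈ w, ∑ i ∈ T k, a i) ∈ A') →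
      ∀ mm : ℕ, mm ≤ m → Adequate 𝒴 mm A' := by
    intro A' hA' mm hmm
    have hbw : AdequateWitness 𝒴 A' (fun k => ∑ i ∈ T k, a i) :=
      blocks_witness 𝒴 hgood𝒴 hM2 A' a ha T hTne hTdisj hA'
    set b : Fin m → BoolGrp := fun k => ∑ i ∈ T k, a i with hbdef
    set S : Fin mm → Finset (Fin m) := fun q => {Fin.castLE hmm q} with hS
    have hSne : ∀ q, (S q).Nonempty := fun q => Finset.singleton_nonempty _
    have hSdisj : ∀ q q' : Fin mm, q ≠ q' → Disjoint (S q) (S q') := by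
      intro q q' hqq
      rw [Finset.disjoint_singleton]
      exact fun hc => hqq (Fin.castLE_injective hmm hc)
    have hSsum : ∀ w : Finset (Fin mm), w.Nonempty →
        (∑ q ∈ w, ∑ i ∈ S q, b i) ∈ A' := by
      intro w hw
      have hsum2 : ∑ q ∈ w, ∑ i ∈ S q, b i
          = ∑ i ∈ w.map (Fin.castLEEmb hmm), b i := by
        rw [Finset.sum_map]
        refine Finset.sum_congr rfl (fun q _ => ?_)
        simp [hS]
      rw [hsum2]
      have hFSb : (∑ i ∈ w.map (Fin.castLEEmb hmm), b i) ∈ FSfin b :=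
        ⟨w.map (Fin.castLEEmb hmm), hw.map, rfl⟩
      exact ((hbw XY₀ hXY₀𝒴).1 hFSb).1
    exact ⟨fun q => ∑ i ∈ S q, b i,
      blocks_witness 𝒴 hgood𝒴 hm2 A' b hbw S hSne hSdisj hSsum⟩
  -- split on the colour
  rcases Bool.dichotomy v with hvf | hvt
  · -- colour false: all block sums avoid A₀, hence lie in A₁
    have hA1 : ∀ w : Finset (Fin m), w.Nonempty → (∑ k ∈ w, ∑ i ∈ T k, a i) ∈ A₁ := by
      intro w hw
      have hnot : ¬ ((∑ j ∈ w.biUnion t, a' j) ∈ A₀) := by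
        have := hv w hw
        rw [hvf] at this
        exact of_decide_eq_false this
      have hmemA := hgA w hw
      rw [hpart] at hmemA
      rcases hmemA with hmem | hmem
      · rw [hgsum w] at hmem
        exact absurd hmem hnot
      · exact hmem
    refine hm₁ ?_
    obtain ⟨wit, hwit⟩ := key A₁ hA1 m₁ (by omega)
    exact ⟨wit, adequateWitness_sub Set.subset_union_right hwit⟩
  · -- colour true: all block sums lie in A₀
    have hA0 : ∀ w : Finset (Fin m), w.Nonempty → (∑ k ∈ w, ∑ i ∈ T k, a i) ∈ A₀ := by
      intro w hw
      have hdec : (∑ j ∈ w.biUnion t, a' j) ∈ A₀ := by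
        have := hv w hw
        rw [hvt] at this
        exact of_decide_eq_true this
      rw [hgsum w]
      exact hdec
    refine hm₀ ?_
    obtain ⟨wit, hwit⟩ := key A₀ hA0 m₀ (by omega)
    exact ⟨wit, adequateWitness_sub Set.subset_union_left hwit⟩
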